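/- Let n ≥ 1 and let f ∈ 𝔚_n, i.e. f : ℝ → ℂ is n times continuously differentiable, for every k = 0,…,n there exists an integrable w_k : ℝ → ℂ with f^{(k)}(x)·(x−i)^k = ∫_ℝ w_k(t)·e^{ixt} dt for all x ∈ ℝ, and x ↦ f^{(k)}(x)·(1+|x|)^{k−1} is integrable for k = 1,…,n. Then for every k = 1,…,n the derivative f^{(k)} is integrable on ℝ and there exists an integrable v_k : ℝ → ℂ with f^{(k)}(x) = ∫_ℝ v_k(t)·e^{ixt} dt for all x ∈ ℝ (i.e. the Fourier transform of f^{(k)} is integrable). -/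

import Mathlib

open MeasureTheory Set Complex

set_option maxHeartbeats 1000000 in

lemma integral_cexp_neg (c : ℂ) (hc : 0 < c.re) :
    ∫ t : ℝ in Set.Ioi (0:ℝ), Complex.exp (-(c * t)) = 1 / c := by
  have hc0 : c ≠ 0 := fun h => by simp [h] at hc
  have hint : IntegrableOn (fun t : ℝ => Complex.exp (-(c * t))) (Set.Ioi 0) := by
    refine Integrable.mono' (g := fun t : ℝ => Real.exp (-c.re * t))
      ((exp_neg_integrableOn_Ioi 0 hc)) ?_ ?_
    · exact (Complex.continuous_exp.comp ((continuous_const.mul Complex.continuous_ofReal).neg)).aestronglyMeasurable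
    · filter_upwards with t
      rw [Complex.norm_exp]
      simp
  have hderiv : ∀ t : ℝ, HasDerivAt (fun t : ℝ => -Complex.exp (-(c * t)) / c)
      (Complex.exp (-(c * t))) t := by
    intro t
    have h1 : HasDerivAt (fun z : ℂ => -Complex.exp (-(c * z)) / c)
        (Complex.exp (-(c * (t:ℂ)))) (t:ℂ) := by
      have := (((hasDerivAt_id ((t:ℝ):ℂ)).const_mul c).neg.cexp.neg.div_const c)
      convert this using 1
      all_goals try rfl
      field_simp
      rfl
    exact h1.comp_ofReal
  have htend : Filter.Tendsto (fun t : ℝ => -Complex.exp (-(c * t)) / c)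
      Filter.atTop (nhds 0) := by
    rw [tendsto_zero_iff_norm_tendsto_zero]
    have : (fun t : ℝ => ‖-Complex.exp (-(c * t)) / c‖)
        = fun t : ℝ => Real.exp (-(c.re * t)) / ‖c‖ := by
      funext t
      rw [norm_div, norm_neg, Complex.norm_exp]
      simp
    rw [this]
    have : Filter.Tendsto (fun t : ℝ => Real.exp (-(c.re * t))) Filter.atTop (nhds 0) :=
      Real.tendsto_exp_atBot.comp
        (Filter.tendsto_neg_atTop_atBot.comp (Filter.tendsto_id.const_mul_atTop hc))
    simpa using this.div_const ‖c‖
  have := integral_Ioi_of_hasDerivAt_of_tendsto' (a := 0)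
      (fun t _ => hderiv t) hint htend
  rw [this]
  simp [hc0]
  ring


noncomputable def kerU : ℝ → ℂ :=
  Set.indicator (Set.Iic 0) (fun t : ℝ => Complex.I * Complex.exp t)

lemma kerU_integrable : Integrable kerU := by
  rw [kerU, integrable_indicator_iff measurableSet_Iic]
  refine Integrable.mono' (g := fun t : ℝ => Real.exp t) (integrableOn_exp_Iic 0) ?_ ?_
  · exact (continuous_const.mul
      (Complex.continuous_exp.comp Complex.continuous_ofReal)).aestronglyMeasurable
  · filter_upwards with t
    simp [Complex.norm_exp]

lemma kerU_spec (x : ℝ) :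
    ∫ t : ℝ, kerU t * Complex.exp (Complex.I * x * t) = ((x : ℂ) - Complex.I)⁻¹ := by
  set c : ℂ := 1 + Complex.I * x with hc
  have hcre : 0 < c.re := by simp [hc]
  have hc0 : c ≠ 0 := fun h => by simp [h] at hcre
  have h1 : ∫ t : ℝ, kerU t * Complex.exp (Complex.I * x * t)
      = ∫ t : ℝ in Set.Iic 0, Complex.I * Complex.exp (c * t) := by
    rw [← integral_indicator measurableSet_Iic]
    congr 1
    funext t
    rw [kerU]
    by_cases ht : t ∈ Set.Iic (0:ℝ)
    · rw [Set.indicator_of_mem ht, Set.indicator_of_mem ht, mul_assoc, ← Complex.exp_add]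
      rw [hc]
      ring_nf
    · rw [Set.indicator_of_notMem ht, Set.indicator_of_notMem ht, zero_mul]
  have h2 : ∫ t : ℝ in Set.Iic (0:ℝ), Complex.I * Complex.exp (c * t)
      = Complex.I * ∫ t : ℝ in Set.Ioi (0:ℝ), Complex.exp (-(c * t)) := by
    have h2' := integral_comp_neg_Ioi (c := (0:ℝ))
      (f := fun t : ℝ => Complex.I * Complex.exp (c * t))
    simp only [neg_zero] at h2'
    rw [← integral_const_mul, ← h2']
    congr 1
    funext t
    push_cast
    ring_nf
  rw [h1, h2, integral_cexp_neg c hcre]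
  have hx : ((x:ℂ) - Complex.I) ≠ 0 := by
    intro h
    have := congrArg Complex.im h
    simp at this
  rw [inv_eq_one_div, eq_div_iff hx]
  field_simp [hc]
  ring_nf
  rw [Complex.I_sq]
  ring


lemma strip_one (H : ℝ → ℂ) (w : ℝ → ℂ) (hw : Integrable w)
    (hH : ∀ x : ℝ, H x * ((x : ℂ) - Complex.I) = ∫ t : ℝ, w t * Complex.exp (Complex.I * x * t)) :
    ∃ v : ℝ → ℂ, Integrable v ∧ ∀ x : ℝ,
      H x = ∫ t : ℝ, v t * Complex.exp (Complex.I * x * t) := by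
  have hI : Integrable (fun p : ℝ × ℝ => w p.2 * kerU (p.1 - p.2)) (volume.prod volume) := by
    have hI0 := hw.convolution_integrand (ContinuousLinearMap.mul ℂ ℂ) kerU_integrable
    simpa using hI0
  refine ⟨fun t => ∫ s : ℝ, w s * kerU (t - s), hI.integral_prod_left, fun x => ?_⟩
  have hx : ((x:ℂ) - Complex.I) ≠ 0 := by
    intro h; have := congrArg Complex.im h; simp at this
  have hIx : Integrable
      (fun p : ℝ × ℝ => w p.2 * kerU (p.1 - p.2) * Complex.exp (Complex.I * x * p.1))
      (volume.prod volume) := by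
    refine hI.norm.mono' ?_ ?_
    · exact hI.aestronglyMeasurable.mul
        (Complex.continuous_exp.comp
          (continuous_const.mul (Complex.continuous_ofReal.comp continuous_fst))).aestronglyMeasurable
    · filter_upwards with p
      rw [norm_mul]
      have : ‖Complex.exp (Complex.I * x * p.1)‖ = 1 := by
        rw [Complex.norm_exp]
        simp
      rw [this, mul_one]
  have key : ∀ s : ℝ, (∫ t : ℝ, kerU (t - s) * Complex.exp (Complex.I * x * t))
      = ((x:ℂ) - Complex.I)⁻¹ * Complex.exp (Complex.I * x * s) := by
    intro s
    have h1 : ∀ t : ℝ, kerU (t - s) * Complex.exp (Complex.I * x * t)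
        = (fun τ : ℝ => kerU τ * Complex.exp (Complex.I * x * τ)) (t - s)
            * Complex.exp (Complex.I * x * s) := by
      intro t
      simp only
      rw [mul_assoc (kerU (t - s)), ← Complex.exp_add]
      congr 1
      congr 1
      push_cast
      ring
    simp_rw [h1]
    rw [integral_mul_const, integral_sub_right_eq_self
      (fun τ : ℝ => kerU τ * Complex.exp (Complex.I * x * τ)) s, kerU_spec x]
  have swap : (∫ t : ℝ, (∫ s : ℝ, w s * kerU (t - s)) * Complex.exp (Complex.I * x * t))
      = ∫ s : ℝ, ∫ t : ℝ, w s * kerU (t - s) * Complex.exp (Complex.I * x * t) := by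
    simp_rw [← integral_mul_const]
    exact integral_integral_swap hIx
  rw [swap]
  have h3 : ∀ s : ℝ, (∫ t : ℝ, w s * kerU (t - s) * Complex.exp (Complex.I * x * t))
      = ((x:ℂ) - Complex.I)⁻¹ * (w s * Complex.exp (Complex.I * x * s)) := by
    intro s
    simp_rw [mul_assoc (w s)]
    rw [integral_const_mul, key s]
    ring
  simp_rw [h3]
  rw [integral_const_mul, ← hH x]
  field_simp


lemma strip_pow : ∀ (m : ℕ) (H : ℝ → ℂ),
    (∃ w : ℝ → ℂ, Integrable w ∧ ∀ x : ℝ,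
      H x * ((x : ℂ) - Complex.I) ^ m = ∫ t : ℝ, w t * Complex.exp (Complex.I * x * t)) →
    ∃ v : ℝ → ℂ, Integrable v ∧ ∀ x : ℝ,
      H x = ∫ t : ℝ, v t * Complex.exp (Complex.I * x * t)
  | 0, H, ⟨w, hw, hspec⟩ => ⟨w, hw, fun x => by simpa using hspec x⟩
  | (m+1), H, ⟨w, hw, hspec⟩ => by
    have h1 : ∀ x : ℝ, (fun y : ℝ => H y * ((y:ℂ) - Complex.I) ^ m) x * ((x:ℂ) - Complex.I)
        = ∫ t : ℝ, w t * Complex.exp (Complex.I * x * t) := by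
      intro x
      rw [← hspec x]
      ring
    obtain ⟨w', hw', hspec'⟩ := strip_one _ w hw h1
    exact strip_pow m H ⟨w', hw', hspec'⟩

/-- Let `n ≥ 1` and `f ∈ 𝔚_n`, i.e. `f : ℝ → ℂ` is `n` times continuously differentiable,
for every `k = 0,…,n` there is an integrable `w_k` with
`f⁽ᵏ⁾(x)·(x−i)ᵏ = ∫ w_k(t)·e^{ixt} dt` (all `x`), and `x ↦ f⁽ᵏ⁾(x)·(1+|x|)^{k−1}` is
integrable for `k = 1,…,n`.  Then for every `k = 1,…,n` the derivative `f⁽ᵏ⁾` is integrable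
and has integrable Fourier transform, i.e. there is an integrable `v` with
`f⁽ᵏ⁾(x) = ∫ v(t)·e^{ixt} dt` for all `x`. -/
theorem stmt4 (n : ℕ) (hn : 1 ≤ n) (f : ℝ → ℂ) (hf : ContDiff ℝ n f)
    (hW1 : ∀ k ≤ n, ∃ w : ℝ → ℂ, Integrable w ∧ ∀ x : ℝ,
      iteratedDeriv k f x * ((x : ℂ) - Complex.I) ^ k =
        ∫ t : ℝ, w t * Complex.exp (Complex.I * x * t))
    (hW2 : ∀ k, 1 ≤ k → k ≤ n →
      Integrable fun x : ℝ => iteratedDeriv k f x * ((1 + |x| : ℝ) : ℂ) ^ (k - 1)) :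
    ∀ k, 1 ≤ k → k ≤ n →
      (Integrable fun x : ℝ => iteratedDeriv k f x) ∧
      ∃ v : ℝ → ℂ, Integrable v ∧ ∀ x : ℝ,
        iteratedDeriv k f x = ∫ t : ℝ, v t * Complex.exp (Complex.I * x * t) := by
  intro k hk1 hk2
  constructor
  · refine (hW2 k hk1 hk2).norm.mono' ?_ ?_
    · exact (hf.continuous_iteratedDeriv k (by exact_mod_cast hk2)).aestronglyMeasurable
    · filter_upwards with x
      rw [norm_mul]
      refine le_mul_of_one_le_right (norm_nonneg _) ?_
      rw [norm_pow, Complex.norm_real, Real.norm_of_nonneg (by positivity)]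
      exact one_le_pow₀ (by simp [abs_nonneg])
  · exact strip_pow k _ (hW1 k hk2)
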